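/- Let z, w be square-free integers with z, w ∉ {0,1}, ℓ = ℚ(√z), and d = gcd(z,w) > 0. Then w ∈ n_{ℓ/ℚ}(ℓ*) (i.e., w = a² - zb² for some rationals a,b not both zero) if and only if: z and w are not both negative, z is a square modulo w/d, w is a square modulo z/d, and -zw/d² is a square modulo d. -/

import Mathlib

lemma isCoprime_of_no_prime {y a : ℤ} (ha : a ≠ 0)
    (H : ∀ p : ℤ, Prime p → p ∣ y → p ∣ a → False) : IsCoprime y a := by
  rw [Int.isCoprime_iff_gcd_eq_one]
  by_contra h
  obtain ⟨p, hp, hpd⟩ := Nat.exists_prime_and_dvd h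
  have h1 : (p : ℤ) ∣ Int.gcd y a := Int.natCast_dvd_natCast.mpr hpd
  exact H p (Nat.prime_iff_prime_int.mp hp) (h1.trans (Int.gcd_dvd_left _ _))
    (h1.trans (Int.gcd_dvd_right _ _))

lemma sq_dvd_contra {p a x : ℤ} (hp : Prime p) (hx : ¬ p ∣ x)
    (h : p^2 ∣ a * x^2) (hsa : Squarefree a) : False := by
  have : IsCoprime (p^2) (x^2) := ((hp.coprime_iff_not_dvd).mpr hx).pow
  have h2 : p^2 ∣ a := this.dvd_of_dvd_mul_right h
  exact hp.not_unit (hsa p (by rw [← sq]; exact h2))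

lemma exists_sq_mod {a : ℤ} (ha : a ≠ 0) (m : ℤ) (v : ZMod a.natAbs)
    (hv : v^2 = (m : ZMod a.natAbs)) : ∃ Y : ℤ, a ∣ Y^2 - m := by
  haveI : NeZero a.natAbs := ⟨Int.natAbs_ne_zero.mpr ha⟩
  refine ⟨(v.val : ℤ), ?_⟩
  rw [← Int.natAbs_dvd, ← ZMod.intCast_zmod_eq_zero_iff_dvd]
  push_cast [ZMod.natCast_val, ZMod.cast_id]
  rw [hv]; ring

lemma cast_zero_self (a : ℤ) : ((a : ℤ) : ZMod a.natAbs) = 0 := by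
  rw [ZMod.intCast_zmod_eq_zero_iff_dvd]; exact Int.natAbs_dvd.mpr (dvd_refl a)

lemma inv_mod {y a : ℤ} (h : IsCoprime y a) :
    ∃ u : ZMod a.natAbs, u * (y : ZMod a.natAbs) = 1 := by
  obtain ⟨s, t, hst⟩ := h
  refine ⟨(s : ZMod a.natAbs), ?_⟩
  have := congrArg (fun n : ℤ => (n : ZMod a.natAbs)) hst
  push_cast at this
  rw [cast_zero_self a] at this; linear_combination this

lemma primitive_solution {a b c x y z : ℤ} (hnt : ¬(x = 0 ∧ y = 0 ∧ z = 0))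
    (heq : a * x^2 + b * y^2 = c * z^2) :
    ∃ X Y Z : ℤ, ¬(X = 0 ∧ Y = 0 ∧ Z = 0) ∧ a * X^2 + b * Y^2 = c * Z^2 ∧
      ∀ p : ℤ, Prime p → ¬(p ∣ X ∧ p ∣ Y ∧ p ∣ Z) := by
  set g : ℤ := (Int.gcd x (Int.gcd y z) : ℤ) with hgdef
  have hg0 : g ≠ 0 := by
    intro h
    rw [hgdef, Int.natCast_eq_zero, Int.gcd_eq_zero_iff] at h
    obtain ⟨hx, h2⟩ := h
    rw [Int.natCast_eq_zero, Int.gcd_eq_zero_iff] at h2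
    exact hnt ⟨hx, h2.1, h2.2⟩
  have hgx : g ∣ x := Int.gcd_dvd_left _ _
  have hgyz : g ∣ (Int.gcd y z : ℤ) := Int.gcd_dvd_right _ _
  have hgy : g ∣ y := hgyz.trans (Int.gcd_dvd_left _ _)
  have hgz : g ∣ z := hgyz.trans (Int.gcd_dvd_right _ _)
  obtain ⟨X, hX⟩ := hgx; obtain ⟨Y, hY⟩ := hgy; obtain ⟨Z, hZ⟩ := hgz
  refine ⟨X, Y, Z, ?_, ?_, ?_⟩
  · rintro ⟨h1, h2, h3⟩
    exact hnt ⟨by simp [hX, h1], by simp [hY, h2], by simp [hZ, h3]⟩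
  · have h2 : g^2 * (a * X^2 + b * Y^2) = g^2 * (c * Z^2) := by
      rw [hX, hY, hZ] at heq; linear_combination heq
    exact mul_left_cancel₀ (pow_ne_zero 2 hg0) h2
  · rintro p hp ⟨h1, h2, h3⟩
    have hdx : g * p ∣ x := by rw [hX]; exact mul_dvd_mul_left g h1
    have hdy : g * p ∣ y := by rw [hY]; exact mul_dvd_mul_left g h2
    have hdz : g * p ∣ z := by rw [hZ]; exact mul_dvd_mul_left g h3
    have h4 : g * p ∣ g := by rw [hgdef]; exact Int.dvd_coe_gcd hdx (Int.dvd_coe_gcd hdy hdz)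
    have : p ∣ 1 := (mul_dvd_mul_iff_left hg0).mp (by simpa using h4)
    exact hp.not_unit (isUnit_of_dvd_one this)

/-- Necessity direction of Legendre's theorem. -/
lemma legendre_nec {a b c : ℤ} (ha : a ≠ 0) (hb : b ≠ 0) (hc : c ≠ 0)
    (hsa : Squarefree a) (hsb : Squarefree b) (hsc : Squarefree c)
    (hab : IsCoprime a b) (hac : IsCoprime a c) (hbc : IsCoprime b c)
    {x y z : ℤ} (hnt : ¬(x = 0 ∧ y = 0 ∧ z = 0)) (heq : a * x^2 + b * y^2 = c * z^2) :
    (∃ r, a ∣ r^2 - b * c) ∧ (∃ s, b ∣ s^2 - a * c) ∧ (∃ t, c ∣ t^2 + a * b) := by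
  obtain ⟨X, Y, Z, hnt', heq', hprim⟩ := primitive_solution hnt heq
  have cYa : IsCoprime Y a := by
    refine isCoprime_of_no_prime ha (fun p hp hpy hpa => ?_)
    have h1 : p ∣ a * X^2 := hpa.mul_right _
    have h2 : p ∣ b * Y^2 := (dvd_pow hpy two_ne_zero).mul_left b
    have hpcz : p ∣ c * Z^2 := heq' ▸ dvd_add h1 h2
    have hpc : ¬ p ∣ c := fun hpc => hp.not_unit (hac.isUnit_of_dvd' hpa hpc)
    have hpz : p ∣ Z := hp.dvd_of_dvd_pow ((hp.dvd_mul.mp hpcz).resolve_left hpc)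
    have hpx : ¬ p ∣ X := fun hpx => hprim p hp ⟨hpx, hpy, hpz⟩
    have h3 : p^2 ∣ a * X^2 := by
      have he : a * X^2 = c * Z^2 - b * Y^2 := by linear_combination heq'
      rw [he]
      exact dvd_sub ((pow_dvd_pow_of_dvd hpz 2).mul_left c)
        ((pow_dvd_pow_of_dvd hpy 2).mul_left b)
    exact sq_dvd_contra hp hpx h3 hsa
  have cXb : IsCoprime X b := by
    refine isCoprime_of_no_prime hb (fun p hp hpx hpb => ?_)
    have h1 : p ∣ b * Y^2 := hpb.mul_right _
    have h2 : p ∣ a * X^2 := (dvd_pow hpx two_ne_zero).mul_left a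
    have hpcz : p ∣ c * Z^2 := heq' ▸ dvd_add h2 h1
    have hpc : ¬ p ∣ c := fun hpc => hp.not_unit (hbc.isUnit_of_dvd' hpb hpc)
    have hpz : p ∣ Z := hp.dvd_of_dvd_pow ((hp.dvd_mul.mp hpcz).resolve_left hpc)
    have hpy : ¬ p ∣ Y := fun hpy => hprim p hp ⟨hpx, hpy, hpz⟩
    have h3 : p^2 ∣ b * Y^2 := by
      have he : b * Y^2 = c * Z^2 - a * X^2 := by linear_combination heq'
      rw [he]
      exact dvd_sub ((pow_dvd_pow_of_dvd hpz 2).mul_left c)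
        ((pow_dvd_pow_of_dvd hpx 2).mul_left a)
    exact sq_dvd_contra hp hpy h3 hsb
  have cYc : IsCoprime Y c := by
    refine isCoprime_of_no_prime hc (fun p hp hpy hpc => ?_)
    have h1 : p ∣ a * X^2 := by
      have he : a * X^2 = c * Z^2 - b * Y^2 := by linear_combination heq'
      rw [he]
      exact dvd_sub (hpc.mul_right _) ((dvd_pow hpy two_ne_zero).mul_left b)
    have hpa : ¬ p ∣ a := fun hpa => hp.not_unit (hac.isUnit_of_dvd' hpa hpc)
    have hpx : p ∣ X := hp.dvd_of_dvd_pow ((hp.dvd_mul.mp h1).resolve_left hpa)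
    have hpz : ¬ p ∣ Z := fun hpz => hprim p hp ⟨hpx, hpy, hpz⟩
    have h3 : p^2 ∣ c * Z^2 := by
      rw [← heq']
      exact dvd_add ((pow_dvd_pow_of_dvd hpx 2).mul_left a)
        ((pow_dvd_pow_of_dvd hpy 2).mul_left b)
    exact sq_dvd_contra hp hpz h3 hsc
  refine ⟨?_, ?_, ?_⟩
  · obtain ⟨u, hu⟩ := inv_mod cYa
    have hthis := congrArg (fun n : ℤ => (n : ZMod a.natAbs)) heq'
    push_cast at hthis
    rw [cast_zero_self a] at hthis
    refine exists_sq_mod ha (b * c) ((c : ZMod a.natAbs) * (Z : ZMod a.natAbs) * u) ?_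
    push_cast
    linear_combination (-(c : ZMod a.natAbs) * u^2) * hthis +
      ((b : ZMod a.natAbs) * (c : ZMod a.natAbs) * (u * (Y : ZMod a.natAbs) + 1)) * hu
  · obtain ⟨u, hu⟩ := inv_mod cXb
    have hthis := congrArg (fun n : ℤ => (n : ZMod b.natAbs)) heq'
    push_cast at hthis
    rw [cast_zero_self b] at hthis
    refine exists_sq_mod hb (a * c) ((c : ZMod b.natAbs) * (Z : ZMod b.natAbs) * u) ?_
    push_cast
    linear_combination (-(c : ZMod b.natAbs) * u^2) * hthis +
      ((a : ZMod b.natAbs) * (c : ZMod b.natAbs) * (u * (X : ZMod b.natAbs) + 1)) * hu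
  · obtain ⟨u, hu⟩ := inv_mod cYc
    have hthis := congrArg (fun n : ℤ => (n : ZMod c.natAbs)) heq'
    push_cast at hthis
    rw [cast_zero_self c] at hthis
    have h4 : ∃ t, c ∣ t^2 - (-(a * b)) := by
      refine exists_sq_mod hc (-(a * b)) ((a : ZMod c.natAbs) * (X : ZMod c.natAbs) * u) ?_
      push_cast
      linear_combination ((a : ZMod c.natAbs) * u^2) * hthis +
        (-(a : ZMod c.natAbs) * (b : ZMod c.natAbs) * (u * (Y : ZMod c.natAbs) + 1)) * hu
    obtain ⟨t, ht⟩ := h4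
    exact ⟨t, by simpa [sub_neg_eq_add] using ht⟩


lemma crt2 {a b : ℤ} (h : IsCoprime a b) (r s : ℤ) : ∃ x, a ∣ x - r ∧ b ∣ x - s := by
  obtain ⟨u, v, huv⟩ := h
  exact ⟨s*(u*a) + r*(v*b), ⟨(s-r)*u, by linear_combination r*huv⟩,
    ⟨(r-s)*v, by linear_combination s*huv⟩⟩

lemma crt3 {a b c : ℤ} (hab : IsCoprime a b) (hac : IsCoprime a c) (hbc : IsCoprime b c)
    (r s t : ℤ) : ∃ x, a ∣ x - r ∧ b ∣ x - s ∧ c ∣ x - t := by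
  obtain ⟨y, hyb, hyc⟩ := crt2 hbc s t
  obtain ⟨x, hxa, hx⟩ := crt2 (hab.mul_right hac) r y
  refine ⟨x, hxa, ?_, ?_⟩
  · have h := dvd_of_mul_right_dvd hx
    simpa using dvd_add h hyb
  · have h := dvd_of_mul_left_dvd hx
    simpa using dvd_add h hyc

lemma sq_diff_le {m : ℤ} (hm : 0 ≤ m) {p q : ℕ}
    (hp : p < Nat.sqrt m.natAbs + 1) (hq : q < Nat.sqrt m.natAbs + 1) :
    ((p : ℤ) - q)^2 ≤ m := by
  set A := Nat.sqrt m.natAbs with hA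
  have hp' : (p : ℤ) ≤ A := by exact_mod_cast Nat.lt_succ_iff.mp hp
  have hq' : (q : ℤ) ≤ A := by exact_mod_cast Nat.lt_succ_iff.mp hq
  have hp0 : (0 : ℤ) ≤ p := Int.natCast_nonneg p
  have hq0 : (0 : ℤ) ≤ q := Int.natCast_nonneg q
  have h1 : ((p : ℤ) - q)^2 ≤ (A : ℤ)^2 := sq_le_sq' (by linarith) (by linarith)
  have h2 : ((A : ℤ))^2 ≤ m := by
    have h3 : A * A ≤ m.natAbs := Nat.sqrt_le m.natAbs
    have h4 : ((A * A : ℕ) : ℤ) ≤ (m.natAbs : ℤ) := Int.ofNat_le.mpr h3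
    rw [Int.natAbs_of_nonneg hm] at h4
    push_cast at h4
    nlinarith [h4]
  linarith

lemma eq_one_of_sq_eq_mul {a b z : ℤ} (hsa : Squarefree a) (hsb : Squarefree b)
    (hab : IsCoprime a b) (ha : 0 < a) (hb : 0 < b) (h : z^2 = a*b) :
    a = 1 ∧ b = 1 := by
  have hz0 : z ≠ 0 := by intro h0; rw [h0] at h; nlinarith
  have hda : a ∣ z := hsa.isRadical 2 z ⟨b, by linear_combination h⟩
  have hdb : b ∣ z := hsb.isRadical 2 z ⟨a, by linear_combination h⟩
  have hdab : a * b ∣ z := hab.mul_dvd hda hdb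
  have hz2 : z^2 ∣ z := by rw [h]; exact hdab
  obtain ⟨k, hk⟩ := hz2
  have h1 : z * 1 = z * (z * k) := by linear_combination hk
  have hzu : z ∣ 1 := ⟨k, mul_left_cancel₀ hz0 h1⟩
  have hz1 : z = 1 ∨ z = -1 := Int.isUnit_iff.mp (isUnit_of_dvd_one hzu)
  have hab1 : a * b = 1 := by
    rcases hz1 with h1 | h1 <;> rw [h1] at h <;> linarith
  have ha1 : a = 1 := Int.eq_one_of_dvd_one ha.le ⟨b, hab1.symm⟩
  have hb1 : b = 1 := Int.eq_one_of_dvd_one hb.le ⟨a, by linarith [hab1]⟩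
  exact ⟨ha1, hb1⟩

lemma suff_one_one {c : ℤ} (hc : 0 < c) (h3 : ∃ t : ℤ, c ∣ t^2 + 1) :
    ∃ x y z : ℤ, ¬(x = 0 ∧ y = 0 ∧ z = 0) ∧ 1 * x^2 + 1 * y^2 = c * z^2 := by
  obtain ⟨t, ht⟩ := h3
  have hs : IsSquare (-1 : ZMod c.natAbs) := by
    refine ⟨(t : ZMod c.natAbs), ?_⟩
    have h0 : ((t^2 + 1 : ℤ) : ZMod c.natAbs) = 0 := by
      rw [ZMod.intCast_zmod_eq_zero_iff_dvd]; exact Int.natAbs_dvd.mpr ht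
    push_cast at h0
    linear_combination -h0
  obtain ⟨X, Y, hXY⟩ := Nat.eq_sq_add_sq_of_isSquare_mod_neg_one hs
  refine ⟨(X : ℤ), (Y : ℤ), 1, fun h => one_ne_zero h.2.2, ?_⟩
  have h1 : (c.natAbs : ℤ) = c := Int.natAbs_of_nonneg hc.le
  have h2 : ((c.natAbs : ℕ) : ℤ) = ((X^2 + Y^2 : ℕ) : ℤ) := by exact_mod_cast congrArg (Nat.cast : ℕ → ℤ) hXY
  rw [h1] at h2
  push_cast at h2
  linarith [h2]

set_option maxHeartbeats 1000000 in
/-- Sufficiency direction of Legendre's theorem. -/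
lemma legendre_suff {a b c : ℤ} (ha : 0 < a) (hb : 0 < b) (hc : 0 < c)
    (hsa : Squarefree a) (hsb : Squarefree b) (hsc : Squarefree c)
    (hab : IsCoprime a b) (hac : IsCoprime a c) (hbc : IsCoprime b c)
    (h1 : ∃ r, a ∣ r^2 - b * c) (h2 : ∃ s, b ∣ s^2 - a * c) (h3 : ∃ t, c ∣ t^2 + a * b) :
    ∃ x y z : ℤ, ¬(x = 0 ∧ y = 0 ∧ z = 0) ∧ a * x^2 + b * y^2 = c * z^2 := by
  by_cases hone : a = 1 ∧ b = 1
  · obtain ⟨ha1, hb1⟩ := hone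
    subst ha1; subst hb1
    exact suff_one_one hc (by simpa using h3)
  obtain ⟨r, hr⟩ := h1
  obtain ⟨s, hs⟩ := h2
  obtain ⟨t, ht⟩ := h3
  obtain ⟨α, hαa, hαb, hαc⟩ := crt3 hab hac hbc 0 a a
  obtain ⟨β, hβa, hβb, hβc⟩ := crt3 hab hac hbc b 0 (-t)
  obtain ⟨γ, hγa, hγb, hγc⟩ := crt3 hab hac hbc (-r) (-s) 0
  have key : ∀ x y z : ℤ, (a*b*c ∣ α*x + β*y + γ*z) →
      a*b*c ∣ a*x^2 + b*y^2 - c*z^2 := by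
    intro x y z hL
    have hLa : a ∣ α*x + β*y + γ*z := dvd_trans ⟨b*c, by ring⟩ hL
    have hLb : b ∣ α*x + β*y + γ*z := dvd_trans ⟨a*c, by ring⟩ hL
    have hLc : c ∣ α*x + β*y + γ*z := dvd_trans ⟨a*b, by ring⟩ hL
    obtain ⟨k1, hk1⟩ := hLa
    obtain ⟨k2, hk2⟩ := hαa
    obtain ⟨k3, hk3⟩ := hβa
    obtain ⟨k4, hk4⟩ := hγa
    have hMa : a ∣ b*y - r*z :=
      ⟨k1 - k2*x - k3*y - k4*z, by linear_combination hk1 - x*hk2 - y*hk3 - z*hk4⟩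
    obtain ⟨l1, hl1⟩ := hLb
    obtain ⟨l2, hl2⟩ := hαb
    obtain ⟨l3, hl3⟩ := hβb
    obtain ⟨l4, hl4⟩ := hγb
    have hMb : b ∣ a*x - s*z :=
      ⟨l1 - l2*x - l3*y - l4*z, by linear_combination hl1 - x*hl2 - y*hl3 - z*hl4⟩
    obtain ⟨m1, hm1⟩ := hLc
    obtain ⟨m2, hm2⟩ := hαc
    obtain ⟨m3, hm3⟩ := hβc
    obtain ⟨m4, hm4⟩ := hγc
    have hMc : c ∣ a*x - t*y :=
      ⟨m1 - m2*x - m3*y - m4*z, by linear_combination hm1 - x*hm2 - y*hm3 - z*hm4⟩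
    obtain ⟨n1, hn1⟩ := hMa
    obtain ⟨n2, hn2⟩ := hr
    have hfa : a ∣ b * (a*x^2 + b*y^2 - c*z^2) :=
      ⟨n1*(b*y + r*z) + n2*z^2 + b*x^2,
        by linear_combination (b*y + r*z)*hn1 + z^2*hn2⟩
    obtain ⟨n3, hn3⟩ := hMb
    obtain ⟨n4, hn4⟩ := hs
    have hfb : b ∣ a * (a*x^2 + b*y^2 - c*z^2) :=
      ⟨n3*(a*x + s*z) + n4*z^2 + a*y^2,
        by linear_combination (a*x + s*z)*hn3 + z^2*hn4⟩
    obtain ⟨n5, hn5⟩ := hMc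
    obtain ⟨n6, hn6⟩ := ht
    have hfc : c ∣ a * (a*x^2 + b*y^2 - c*z^2) :=
      ⟨n5*(a*x + t*y) + n6*y^2 - a*z^2,
        by linear_combination (a*x + t*y)*hn5 + y^2*hn6⟩
    exact (hac.mul_left hbc).mul_dvd
      (hab.mul_dvd (hab.dvd_of_dvd_mul_left hfa) (hab.symm.dvd_of_dvd_mul_left hfb))
      (hac.symm.dvd_of_dvd_mul_left hfc)
  -- pigeonhole setup
  have habc : 0 < a*b*c := by positivity
  set N := (a*b*c).natAbs with hNdef
  have hN0 : N ≠ 0 := Int.natAbs_ne_zero.mpr habc.ne'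
  haveI : NeZero N := ⟨hN0⟩
  have hNcast : (N : ℤ) = a*b*c := by rw [hNdef]; exact Int.natAbs_of_nonneg habc.le
  set A := Nat.sqrt (b*c).natAbs with hAdef
  set B := Nat.sqrt (a*c).natAbs with hBdef
  set C := Nat.sqrt (a*b).natAbs with hCdef
  set S : Finset (ℕ×ℕ×ℕ) :=
    Finset.range (A+1) ×ˢ Finset.range (B+1) ×ˢ Finset.range (C+1) with hSdef
  have hScard : S.card = (A+1) * ((B+1) * (C+1)) := by
    simp [hSdef, Finset.card_product]
  have hlt : (Finset.univ : Finset (ZMod N)).card < S.card := by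
    rw [Finset.card_univ, ZMod.card, hScard]
    have h1 : (b*c).natAbs < (A+1)*(A+1) := by
      rw [hAdef]; exact Nat.lt_succ_sqrt _
    have h2 : (a*c).natAbs < (B+1)*(B+1) := by
      rw [hBdef]; exact Nat.lt_succ_sqrt _
    have h3 : (a*b).natAbs < (C+1)*(C+1) := by
      rw [hCdef]; exact Nat.lt_succ_sqrt _
    have hNN : N*N = (b*c).natAbs * ((a*c).natAbs * (a*b).natAbs) := by
      rw [hNdef, ← Int.natAbs_mul, ← Int.natAbs_mul, ← Int.natAbs_mul]
      congr 1; ring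
    have key2 : N*N < ((A+1)*((B+1)*(C+1))) * ((A+1)*((B+1)*(C+1))) := by
      calc N*N = (b*c).natAbs * ((a*c).natAbs * (a*b).natAbs) := hNN
        _ < ((A+1)*(A+1)) * (((B+1)*(B+1)) * ((C+1)*(C+1))) :=
            mul_lt_mul'' h1 (mul_lt_mul'' h2 h3 (Nat.zero_le _) (Nat.zero_le _))
              (Nat.zero_le _) (Nat.zero_le _)
        _ = ((A+1)*((B+1)*(C+1))) * ((A+1)*((B+1)*(C+1))) := by ring
    exact Nat.mul_self_lt_mul_self_iff.mp key2
  obtain ⟨u, hu, v, hv, huv, hgeq⟩ :=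
    Finset.exists_ne_map_eq_of_card_lt_of_maps_to hlt
      (fun p _ => Finset.mem_univ
        ((α : ZMod N) * (p.1 : ZMod N) + (β : ZMod N) * (p.2.1 : ZMod N)
          + (γ : ZMod N) * (p.2.2 : ZMod N)))
  simp only [hSdef, Finset.mem_product, Finset.mem_range] at hu hv
  obtain ⟨hu1, hu2, hu3⟩ := hu
  obtain ⟨hv1, hv2, hv3⟩ := hv
  set x : ℤ := (u.1 : ℤ) - (v.1 : ℤ) with hxdef
  set y : ℤ := (u.2.1 : ℤ) - (v.2.1 : ℤ) with hydef
  set z : ℤ := (u.2.2 : ℤ) - (v.2.2 : ℤ) with hzdef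
  have hLdvd : a*b*c ∣ α*x + β*y + γ*z := by
    rw [← hNcast, ← Int.natAbs_dvd, Int.natAbs_natCast, ← ZMod.intCast_zmod_eq_zero_iff_dvd]
    push_cast [hxdef, hydef, hzdef]
    linear_combination hgeq
  have hfd := key x y z hLdvd
  have hx2 : x^2 ≤ b*c := sq_diff_le (by positivity) hu1 hv1
  have hy2 : y^2 ≤ a*c := sq_diff_le (by positivity) hu2 hv2
  have hz2 : z^2 ≤ a*b := sq_diff_le (by positivity) hu3 hv3
  obtain ⟨q, hq⟩ := hfd
  have hax : a*x^2 ≤ a*(b*c) := mul_le_mul_of_nonneg_left hx2 ha.le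
  have hby : b*y^2 ≤ b*(a*c) := mul_le_mul_of_nonneg_left hy2 hb.le
  have hcz : c*z^2 ≤ c*(a*b) := mul_le_mul_of_nonneg_left hz2 hc.le
  have hax0 : 0 ≤ a*x^2 := by positivity
  have hby0 : 0 ≤ b*y^2 := by positivity
  have hcz0 : 0 ≤ c*z^2 := by positivity
  have hqu : q ≤ 2 := by
    have e1 : a*(b*c) + b*(a*c) = a*b*c*2 := by ring
    have h6 : a*b*c*q ≤ a*b*c*2 := by linarith
    exact le_of_mul_le_mul_left h6 habc
  have hql : -1 ≤ q := by
    have e2 : c*(a*b) = a*b*c := by ring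
    have h6 : a*b*c*(-1) ≤ a*b*c*q := by linarith
    exact le_of_mul_le_mul_left h6 habc
  interval_cases q
  · -- q = -1 : forces a = b = 1, contradiction
    exfalso
    have h5 : a*x^2 + b*y^2 + c*(a*b - z^2) = 0 := by linear_combination hq
    have t3 : 0 ≤ c*(a*b - z^2) := mul_nonneg hc.le (by linarith)
    have h7 : c*(a*b - z^2) = 0 := le_antisymm (by linarith) t3
    have h8 : a*b - z^2 = 0 := (mul_eq_zero.mp h7).resolve_left hc.ne'
    have hzz : z^2 = a*b := by linarith
    exact hone (eq_one_of_sq_eq_mul hsa hsb hab ha hb hzz)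
  · -- q = 0 : direct solution
    refine ⟨x, y, z, ?_, by linear_combination hq⟩
    rintro ⟨hx0, hy0, hz0⟩
    apply huv
    have e1 : u.1 = v.1 := by
      have : (u.1 : ℤ) = (v.1 : ℤ) := by rw [hxdef] at hx0; linarith
      exact_mod_cast this
    have e2 : u.2.1 = v.2.1 := by
      have : (u.2.1 : ℤ) = (v.2.1 : ℤ) := by rw [hydef] at hy0; linarith
      exact_mod_cast this
    have e3 : u.2.2 = v.2.2 := by
      have : (u.2.2 : ℤ) = (v.2.2 : ℤ) := by rw [hzdef] at hz0; linarith
      exact_mod_cast this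
    exact Prod.ext e1 (Prod.ext e2 e3)
  · -- q = 1 : descent identity
    refine ⟨x*z + b*y, y*z - a*x, z^2 + a*b, ?_, by linear_combination (z^2 + a*b)*hq⟩
    rintro ⟨-, -, h5⟩
    have : 0 < z^2 + a*b := by positivity
    exact this.ne' h5
  · -- q = 2 : forces a = b = 1, contradiction
    exfalso
    have h5 : a*(b*c - x^2) + b*(a*c - y^2) + c*z^2 = 0 := by linear_combination -hq
    have t1 : 0 ≤ a*(b*c - x^2) := mul_nonneg ha.le (by linarith)
    have t2 : 0 ≤ b*(a*c - y^2) := mul_nonneg hb.le (by linarith)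
    have h7 : a*(b*c - x^2) = 0 := le_antisymm (by linarith) t1
    have h8 : b*(a*c - y^2) = 0 := le_antisymm (by linarith) t2
    have hx2' : x^2 = b*c := by
      have := (mul_eq_zero.mp h7).resolve_left ha.ne'; linarith
    have hy2' : y^2 = a*c := by
      have := (mul_eq_zero.mp h8).resolve_left hb.ne'; linarith
    have hbc1 := eq_one_of_sq_eq_mul hsb hsc hbc hb hc hx2'
    have hac1 := eq_one_of_sq_eq_mul hsa hsc hac ha hc hy2'
    exact hone ⟨hac1.1, hbc1.1⟩

lemma sqf_coprime {m n : ℤ} (h : Squarefree (m*n)) : IsCoprime m n :=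
  isRelPrime_iff_isCoprime.mp (squarefree_mul_iff.mp h).1

lemma num_eq (a : ℚ) : (a.num : ℚ) = a * (a.den : ℚ) := by
  rw [mul_comm]; exact_mod_cast (Rat.den_mul_eq_num a).symm

lemma rat_to_int {z w : ℤ} (h : ∃ a b : ℚ, ¬(a = 0 ∧ b = 0) ∧ (w:ℚ) = a^2 - (z:ℚ)*b^2) :
    ∃ x y t : ℤ, ¬(x = 0 ∧ y = 0 ∧ t = 0) ∧ x^2 = z*y^2 + w*t^2 := by
  obtain ⟨a, b, hab, habe⟩ := h
  refine ⟨a.num * b.den, b.num * a.den, (a.den : ℤ) * b.den, ?_, ?_⟩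
  · rintro ⟨-, -, h3⟩
    exact (mul_ne_zero (Int.natCast_ne_zero.mpr a.den_nz) (Int.natCast_ne_zero.mpr b.den_nz)) h3
  · have key : ((a.num * b.den)^2 - (z*(b.num * a.den)^2 + w*((a.den : ℤ) * b.den)^2) : ℤ)
        = (0 : ℤ) := by
      have : (((a.num * b.den)^2 - (z*(b.num * a.den)^2 + w*((a.den : ℤ) * b.den)^2) : ℤ) : ℚ)
          = 0 := by
        push_cast
        rw [num_eq a, num_eq b, habe]
        ring
      exact_mod_cast this
    linarith [key]

lemma int_to_rat {z w : ℤ} (hz : Squarefree z) (hz1 : z ≠ 1) (hw0 : w ≠ 0)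
    (h : ∃ x y t : ℤ, ¬(x = 0 ∧ y = 0 ∧ t = 0) ∧ x^2 = z*y^2 + w*t^2) :
    ∃ a b : ℚ, ¬(a = 0 ∧ b = 0) ∧ (w:ℚ) = a^2 - (z:ℚ)*b^2 := by
  obtain ⟨x, y, t, hnt, heq⟩ := h
  rcases eq_or_ne t 0 with ht0 | ht0
  · exfalso
    subst ht0
    have hy0 : y ≠ 0 := by
      rintro rfl
      have hx2 : x^2 = 0 := by linear_combination heq
      exact hnt ⟨pow_eq_zero_iff two_ne_zero |>.mp hx2, rfl, rfl⟩
    have hdvd : y^2 ∣ x^2 := ⟨z, by linear_combination heq⟩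
    obtain ⟨k, hk⟩ := (Int.pow_dvd_pow_iff two_ne_zero).mp hdvd
    have hzk : z = k^2 := by
      have h2 : y^2 * k^2 = y^2 * z := by rw [hk] at heq; linear_combination heq
      have := mul_left_cancel₀ (pow_ne_zero 2 hy0) h2
      linarith
    have hu : IsUnit k := hz k ⟨1, by rw [hzk]; ring⟩
    rcases Int.isUnit_iff.mp hu with h | h <;> rw [h] at hzk <;> norm_num at hzk <;>
      exact hz1 hzk
  · refine ⟨(x : ℚ)/t, (y : ℚ)/t, ?_, ?_⟩
    · rintro ⟨h1, h2⟩
      have ht0' : (t:ℚ) ≠ 0 := Int.cast_ne_zero.mpr ht0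
      have hx0 : x = 0 := by
        have := div_eq_zero_iff.mp h1
        exact_mod_cast this.resolve_right ht0'
      have hy0 : y = 0 := by
        have := div_eq_zero_iff.mp h2
        exact_mod_cast this.resolve_right ht0'
      rw [hx0, hy0] at heq
      have : w * t^2 = 0 := by linarith [heq]
      rcases mul_eq_zero.mp this with h | h
      · exact hw0 h
      · exact ht0 (pow_eq_zero_iff two_ne_zero |>.mp h)
    · have ht0' : (t:ℚ) ≠ 0 := Int.cast_ne_zero.mpr ht0
      have hq : (x:ℚ)^2 = (z:ℚ)*(y:ℚ)^2 + (w:ℚ)*(t:ℚ)^2 := by exact_mod_cast heq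
      field_simp
      linarith [hq]


lemma sqf_neg {n : ℤ} (h : Squarefree n) : Squarefree (-n) :=
  fun x hx => h x (dvd_neg.mp hx)

lemma pos_fac {d z z1 : ℤ} (hd : 0 < d) (he : z = d*z1) (hz : 0 < z) : 0 < z1 := by
  rcases lt_trichotomy z1 0 with h | h | h
  · nlinarith
  · rw [h, mul_zero] at he; omega
  · exact h

lemma neg_fac {d z z1 : ℤ} (hd : 0 < d) (he : z = d*z1) (hz : z < 0) : z1 < 0 := by
  rcases lt_trichotomy z1 0 with h | h | h
  · exact h
  · rw [h, mul_zero] at he; omega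
  · nlinarith

set_option maxHeartbeats 1000000 in
/-- w ∈ n_{ℚ(√z)/ℚ}(ℓ*) iff z, w are not both negative, z is a square
mod w/d, w is a square mod z/d and -zw/d² is a square mod d, where d = gcd(z,w). -/
theorem norm_iff_legendre_conditions (z w : ℤ)
    (hz : Squarefree z) (hz1 : z ≠ 1) (hw : Squarefree w) (hw1 : w ≠ 1)
    (d : ℤ) (hd : d = Int.gcd z w) :
    (∃ a b : ℚ, ¬(a = 0 ∧ b = 0) ∧ (w : ℚ) = a ^ 2 - (z : ℚ) * b ^ 2) ↔
      (¬(z < 0 ∧ w < 0) ∧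
       (∃ y : ℤ, (w / d) ∣ (y ^ 2 - z)) ∧
       (∃ y : ℤ, (z / d) ∣ (y ^ 2 - w)) ∧
       (∃ y : ℤ, d ∣ (y ^ 2 + (z / d) * (w / d)))) := by
  have hz0 : z ≠ 0 := hz.ne_zero
  have hw0 : w ≠ 0 := hw.ne_zero
  have hd0 : 0 < d := by
    rw [hd]; exact_mod_cast Int.gcd_pos_iff.mpr (Or.inl hz0)
  have hdz : d ∣ z := by rw [hd]; exact Int.gcd_dvd_left _ _
  have hdw : d ∣ w := by rw [hd]; exact Int.gcd_dvd_right _ _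
  set z₁ := z / d with hz1def
  set w₁ := w / d with hw1def
  have hze : z = d * z₁ := (Int.mul_ediv_cancel' hdz).symm
  have hwe : w = d * w₁ := (Int.mul_ediv_cancel' hdw).symm
  have hz10 : z₁ ≠ 0 := fun h => hz0 (by rw [hze, h, mul_zero])
  have hw10 : w₁ ≠ 0 := fun h => hw0 (by rw [hwe, h, mul_zero])
  have hsd : Squarefree d := hz.squarefree_of_dvd hdz
  have hsz1 : Squarefree z₁ := hz.squarefree_of_dvd ⟨d, by rw [hze]; ring⟩
  have hsw1 : Squarefree w₁ := hw.squarefree_of_dvd ⟨d, by rw [hwe]; ring⟩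
  have hdz1 : IsCoprime d z₁ := sqf_coprime (by rwa [← hze])
  have hdw1 : IsCoprime d w₁ := sqf_coprime (by rwa [← hwe])
  have hz1w1 : IsCoprime z₁ w₁ := by
    rw [Int.isCoprime_iff_gcd_eq_one]
    have h1 : Int.gcd (d*z₁) (d*w₁) = d.natAbs * Int.gcd z₁ w₁ := Int.gcd_mul_left d z₁ w₁
    rw [← hze, ← hwe] at h1
    have h2 : d.natAbs = Int.gcd z w := by rw [hd]; simp
    rw [← h2] at h1
    have h3 : d.natAbs * 1 = d.natAbs * Int.gcd z₁ w₁ := by rw [mul_one]; exact h1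
    exact (Nat.eq_of_mul_eq_mul_left (Int.natAbs_pos.mpr hd0.ne') h3).symm
  constructor
  · rintro hrat
    have hnb : ¬(z < 0 ∧ w < 0) := by
      rintro ⟨hzn, hwn⟩
      obtain ⟨a, b, hab, habe⟩ := hrat
      have h1 : (z:ℚ) < 0 := by exact_mod_cast hzn
      have h2 : (w:ℚ) < 0 := by exact_mod_cast hwn
      nlinarith [sq_nonneg a, sq_nonneg b]
    obtain ⟨x, y, t, hnt, heq⟩ := rat_to_int hrat
    have hdx : d ∣ x := by
      apply hsd.isRadical 2 x
      exact ⟨z₁*y^2 + w₁*t^2, by rw [hze, hwe] at heq; linear_combination heq⟩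
    obtain ⟨X, hX⟩ := hdx
    have heq2 : d*X^2 = z₁*y^2 + w₁*t^2 := by
      rw [hX, hze, hwe] at heq
      apply mul_left_cancel₀ hd0.ne'
      linear_combination heq
    have hnt2 : ¬(X = 0 ∧ y = 0 ∧ t = 0) := by
      rintro ⟨h1, h2, h3⟩; exact hnt ⟨by rw [hX, h1, mul_zero], h2, h3⟩
    refine ⟨hnb, ?_⟩
    rcases hz0.lt_or_gt with hzn | hzp
    · -- z < 0, w > 0
      have hwp : 0 < w := (hw0.lt_or_gt).resolve_left (fun hwn => hnb ⟨hzn, hwn⟩)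
      have heq3 : d*X^2 + (-z₁)*y^2 = w₁*t^2 := by linear_combination heq2
      obtain ⟨⟨r, hr⟩, ⟨s, hs⟩, ⟨u, hu⟩⟩ :=
        legendre_nec hd0.ne' (neg_ne_zero.mpr hz10) hw10 hsd (sqf_neg hsz1) hsw1
          hdz1.neg_right hdw1 hz1w1.neg_left hnt2 heq3
      obtain ⟨k1, hk1⟩ := hr
      obtain ⟨k2, hk2⟩ := hs
      obtain ⟨k3, hk3⟩ := hu
      refine ⟨⟨u, ⟨k3, by rw [hze]; linear_combination hk3⟩⟩,
        ⟨s, ⟨-k2, by rw [hwe]; linear_combination hk2⟩⟩,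
        ⟨r, ⟨k1, by linear_combination hk1⟩⟩⟩
    · rcases hw0.lt_or_gt with hwn | hwp
      · -- z > 0, w < 0
        have heq3 : d*X^2 + (-w₁)*t^2 = z₁*y^2 := by linear_combination heq2
        have hnt3 : ¬(X = 0 ∧ t = 0 ∧ y = 0) := by
          rintro ⟨h1, h2, h3⟩; exact hnt2 ⟨h1, h3, h2⟩
        obtain ⟨⟨r, hr⟩, ⟨s, hs⟩, ⟨u, hu⟩⟩ :=
          legendre_nec hd0.ne' (neg_ne_zero.mpr hw10) hz10 hsd (sqf_neg hsw1) hsz1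
            hdw1.neg_right hdz1 (hz1w1.symm.neg_left) hnt3 heq3
        obtain ⟨k1, hk1⟩ := hr
        obtain ⟨k2, hk2⟩ := hs
        obtain ⟨k3, hk3⟩ := hu
        refine ⟨⟨s, ⟨-k2, by rw [hze]; linear_combination hk2⟩⟩,
          ⟨u, ⟨k3, by rw [hwe]; linear_combination hk3⟩⟩,
          ⟨r, ⟨k1, by linear_combination hk1⟩⟩⟩
      · -- z > 0, w > 0
        have heq3 : z₁*y^2 + w₁*t^2 = d*X^2 := by linear_combination -heq2
        have hnt3 : ¬(y = 0 ∧ t = 0 ∧ X = 0) := by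
          rintro ⟨h1, h2, h3⟩; exact hnt2 ⟨h3, h1, h2⟩
        obtain ⟨⟨r, hr⟩, ⟨s, hs⟩, ⟨u, hu⟩⟩ :=
          legendre_nec hz10 hw10 hd0.ne' hsz1 hsw1 hsd hz1w1 hdz1.symm hdw1.symm
            hnt3 heq3
        obtain ⟨k1, hk1⟩ := hr
        obtain ⟨k2, hk2⟩ := hs
        obtain ⟨k3, hk3⟩ := hu
        refine ⟨⟨s, ⟨k2, by rw [hze]; linear_combination hk2⟩⟩,
          ⟨r, ⟨k1, by rw [hwe]; linear_combination hk1⟩⟩,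
          ⟨u, ⟨k3, by linear_combination hk3⟩⟩⟩
  · rintro ⟨hnb, c1, c2, c3⟩
    obtain ⟨e1, he1⟩ := c1
    obtain ⟨e2, he2⟩ := c2
    obtain ⟨e3, he3⟩ := c3
    obtain ⟨m1, hm1⟩ := he1
    obtain ⟨m2, hm2⟩ := he2
    obtain ⟨m3, hm3⟩ := he3
    rw [hze] at hm1
    rw [hwe] at hm2
    have main : ∃ X y t : ℤ, ¬(X = 0 ∧ y = 0 ∧ t = 0) ∧ d*X^2 = z₁*y^2 + w₁*t^2 := by
      rcases hz0.lt_or_gt with hzn | hzp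
      · have hwp : 0 < w := (hw0.lt_or_gt).resolve_left (fun hwn => hnb ⟨hzn, hwn⟩)
        have hz1n : z₁ < 0 := neg_fac hd0 hze hzn
        have hw1p : 0 < w₁ := pos_fac hd0 hwe hwp
        obtain ⟨X, Y, T, hnt3, heq3⟩ :=
          legendre_suff hd0 (neg_pos.mpr hz1n) hw1p hsd (sqf_neg hsz1) hsw1
            hdz1.neg_right hdw1 hz1w1.neg_left
            ⟨e3, ⟨m3, by linear_combination hm3⟩⟩
            ⟨e2, ⟨-m2, by linear_combination hm2⟩⟩
            ⟨e1, ⟨m1, by linear_combination hm1⟩⟩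
        exact ⟨X, Y, T, hnt3, by linear_combination heq3⟩
      · rcases hw0.lt_or_gt with hwn | hwp
        · have hz1p : 0 < z₁ := pos_fac hd0 hze hzp
          have hw1n : w₁ < 0 := neg_fac hd0 hwe hwn
          obtain ⟨X, T, Y, hnt3, heq3⟩ :=
            legendre_suff hd0 (neg_pos.mpr hw1n) hz1p hsd (sqf_neg hsw1) hsz1
              hdw1.neg_right hdz1 hz1w1.symm.neg_left
              ⟨e3, ⟨m3, by linear_combination hm3⟩⟩
              ⟨e1, ⟨-m1, by linear_combination hm1⟩⟩
              ⟨e2, ⟨m2, by linear_combination hm2⟩⟩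
          refine ⟨X, Y, T, ?_, by linear_combination heq3⟩
          rintro ⟨h1, h2, h3⟩; exact hnt3 ⟨h1, h3, h2⟩
        · have hz1p : 0 < z₁ := pos_fac hd0 hze hzp
          have hw1p : 0 < w₁ := pos_fac hd0 hwe hwp
          obtain ⟨Y, T, X, hnt3, heq3⟩ :=
            legendre_suff hz1p hw1p hd0 hsz1 hsw1 hsd hz1w1 hdz1.symm hdw1.symm
              ⟨e2, ⟨m2, by linear_combination hm2⟩⟩
              ⟨e1, ⟨m1, by linear_combination hm1⟩⟩
              ⟨e3, ⟨m3, by linear_combination hm3⟩⟩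
          refine ⟨X, Y, T, ?_, by linear_combination -heq3⟩
          rintro ⟨h1, h2, h3⟩; exact hnt3 ⟨h2, h3, h1⟩
    obtain ⟨X, y, t, hnt2, heq2⟩ := main
    apply int_to_rat hz hz1 hw0
    refine ⟨d*X, y, t, ?_, by rw [hze, hwe]; linear_combination d*heq2⟩
    rintro ⟨h1, h2, h3⟩
    exact hnt2 ⟨(mul_eq_zero.mp h1).resolve_left hd0.ne', h2, h3⟩
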